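/- Let A be an n×n complex matrix with I − Aᴴ A positive semidefinite (i.e. A is a contraction), and let φ be a finite Blaschke product of degree d determined by ζ and α_1, …, α_d. Then each matrix I − conj(α_k)·A is invertible, each Möbius factor (A − α_k·I)(I − conj(α_k)·A)⁻¹ is a contraction (indeed (I − conj(α_k)·A)ᴴ(I − conj(α_k)·A) − (A − α_k·I)ᴴ(A − α_k·I) = (1 − |α_k|²)(I − AᴴA)), and consequently φ(A) is a contraction: I − φ(A)ᴴ φ(A) is positive semidefinite. -/

import Mathlib

open Matrix ComplexOrder

/-- `φ(A)` for the finite Blaschke product `φ` determined by the unimodular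
constant `ζ` and the zeros `α 0, …, α (d-1)` in the open unit disc. -/
noncomputable def blaschkeMatrix {n d : ℕ} (ζ : ℂ) (α : Fin d → ℂ)
    (A : Matrix (Fin n) (Fin n) ℂ) : Matrix (Fin n) (Fin n) ℂ :=
  ζ • (List.ofFn fun k : Fin d =>
    (A - α k • 1) * (1 - (starRingEnd ℂ) (α k) • A)⁻¹).prod

lemma aux_smul_psd {n : ℕ} {M : Matrix (Fin n) (Fin n) ℂ} (hM : M.PosSemidef)
    {r : ℝ} (hr : 0 ≤ r) : ((r : ℂ) • M).PosSemidef := by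
  rw [posSemidef_iff_dotProduct_mulVec]
  constructor
  · rw [IsHermitian, conjTranspose_smul, hM.1.eq]
    congr 1
    simp [Complex.ext_iff]
  · intro x
    rw [smul_mulVec, dotProduct_smul]
    exact mul_nonneg (by simpa using Complex.zero_le_real.mpr hr) (hM.dotProduct_mulVec_nonneg x)

lemma aux_key {n : ℕ} {B C : Matrix (Fin n) (Fin n) ℂ} (hinv : B * B⁻¹ = 1) :
    1 - (C * B⁻¹)ᴴ * (C * B⁻¹) = (B⁻¹)ᴴ * (Bᴴ * B - Cᴴ * C) * B⁻¹ := by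
  have h1 : (1 : Matrix (Fin n) (Fin n) ℂ) = (B⁻¹)ᴴ * (Bᴴ * B) * B⁻¹ := by
    calc (1 : Matrix (Fin n) (Fin n) ℂ) = (B * B⁻¹)ᴴ * (B * B⁻¹) := by rw [hinv]; simp
    _ = (B⁻¹)ᴴ * (Bᴴ * B) * B⁻¹ := by simp only [conjTranspose_mul]; noncomm_ring
  nth_rewrite 1 [h1]
  simp only [conjTranspose_mul]
  noncomm_ring

lemma aux_contr_mul {n : ℕ} {X Y : Matrix (Fin n) (Fin n) ℂ}
    (hX : (1 - Xᴴ * X).PosSemidef) (hY : (1 - Yᴴ * Y).PosSemidef) :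
    (1 - (X * Y)ᴴ * (X * Y)).PosSemidef := by
  have h : 1 - (X * Y)ᴴ * (X * Y) = (1 - Yᴴ * Y) + Yᴴ * (1 - Xᴴ * X) * Y := by
    simp only [conjTranspose_mul]
    noncomm_ring
  rw [h]
  exact hY.add (hX.conjTranspose_mul_mul_same Y)

theorem stmt_12 {n d : ℕ}
    (A : Matrix (Fin n) (Fin n) ℂ)
    (hA_contr : (1 - Aᴴ * A).PosSemidef)
    (ζ : ℂ) (hζ : ‖ζ‖ = 1) (α : Fin d → ℂ) (hα : ∀ k, ‖α k‖ < 1) :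
    (∀ k : Fin d, IsUnit (1 - (starRingEnd ℂ) (α k) • A)) ∧
    (∀ k : Fin d,
      (1 - (starRingEnd ℂ) (α k) • A)ᴴ * (1 - (starRingEnd ℂ) (α k) • A) -
          (A - α k • 1)ᴴ * (A - α k • 1) =
        ((1 - ‖α k‖ ^ 2 : ℝ) : ℂ) • (1 - Aᴴ * A)) ∧
    (∀ k : Fin d,
      (1 - ((A - α k • 1) * (1 - (starRingEnd ℂ) (α k) • A)⁻¹)ᴴ *
        ((A - α k • 1) * (1 - (starRingEnd ℂ) (α k) • A)⁻¹)).PosSemidef) ∧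
    (1 - (blaschkeMatrix ζ α A)ᴴ * blaschkeMatrix ζ α A).PosSemidef := by
  -- part 1 : invertibility
  have hAx : ∀ x : Fin n → ℂ, star (A *ᵥ x) ⬝ᵥ (A *ᵥ x) ≤ star x ⬝ᵥ x := by
    intro x
    have := hA_contr.dotProduct_mulVec_nonneg x
    rw [sub_mulVec, dotProduct_sub, one_mulVec, sub_nonneg, ← mulVec_mulVec,
      dotProduct_mulVec, ← star_mulVec] at this
    exact this
  have hunit : ∀ k : Fin d, IsUnit (1 - (starRingEnd ℂ) (α k) • A) := by
    intro k
    rw [← Matrix.mulVec_injective_iff_isUnit]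
    intro x y hxy
    have h : ∀ z : Fin n → ℂ, (1 - (starRingEnd ℂ) (α k) • A) *ᵥ z = 0 → z = 0 := by
      intro z hz
      rw [sub_mulVec, one_mulVec, sub_eq_zero, smul_mulVec] at hz
      by_contra hz0
      have hnn : (0:ℂ) ≤ ((‖α k‖ : ℂ)) ^ 2 :=
        pow_nonneg (Complex.zero_le_real.mpr (norm_nonneg _)) 2
      have h1 : star z ⬝ᵥ z = ((‖α k‖ : ℂ)) ^ 2 * (star (A *ᵥ z) ⬝ᵥ (A *ᵥ z)) := by
        nth_rewrite 1 [hz]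
        nth_rewrite 2 [hz]
        rw [star_smul, smul_dotProduct, dotProduct_smul, smul_smul, smul_eq_mul]
        congr 1
        rw [Complex.star_def, Complex.conj_conj, Complex.mul_conj']
      have hle : star z ⬝ᵥ z ≤ ((‖α k‖ : ℂ)) ^ 2 * (star z ⬝ᵥ z) :=
        calc star z ⬝ᵥ z = ((‖α k‖ : ℂ)) ^ 2 * (star (A *ᵥ z) ⬝ᵥ (A *ᵥ z)) := h1
          _ ≤ ((‖α k‖ : ℂ)) ^ 2 * (star z ⬝ᵥ z) :=
            mul_le_mul_of_nonneg_left (hAx z) hnn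
      have hpos : 0 < star z ⬝ᵥ z := by
        rcases lt_or_eq_of_le (dotProduct_star_self_nonneg z) with h | h
        · exact h
        · exact absurd (dotProduct_star_self_eq_zero.mp h.symm) hz0
      have hlt : ((‖α k‖ : ℂ)) ^ 2 * (star z ⬝ᵥ z) < 1 * (star z ⬝ᵥ z) := by
        apply mul_lt_mul_of_pos_right _ hpos
        have : ((‖α k‖ ^ 2 : ℝ) : ℂ) < ((1:ℝ) : ℂ) := by
          rw [Complex.real_lt_real]
          nlinarith [hα k, norm_nonneg (α k)]
        simpa using this
      rw [one_mul] at hlt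
      exact absurd (lt_of_le_of_lt hle hlt) (lt_irrefl _)
    exact sub_eq_zero.mp (h (x - y) (by rw [mulVec_sub, hxy, sub_self]))
  -- part 2 : the identity
  have hid : ∀ k : Fin d,
      (1 - (starRingEnd ℂ) (α k) • A)ᴴ * (1 - (starRingEnd ℂ) (α k) • A) -
          (A - α k • 1)ᴴ * (A - α k • 1) =
        ((1 - ‖α k‖ ^ 2 : ℝ) : ℂ) • (1 - Aᴴ * A) := by
    intro k
    have hconj : (starRingEnd ℂ) (α k) * α k = ((‖α k‖ ^ 2 : ℝ) : ℂ) := by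
      rw [mul_comm, Complex.mul_conj']
      norm_cast
    have hconj2 : α k * (starRingEnd ℂ) (α k) = ((‖α k‖ ^ 2 : ℝ) : ℂ) := by
      rw [Complex.mul_conj']
      norm_cast
    simp only [conjTranspose_sub, conjTranspose_smul, conjTranspose_one,
      Complex.star_def, Complex.conj_conj, Matrix.sub_mul, Matrix.mul_sub,
      Matrix.smul_mul, Matrix.mul_smul, Matrix.one_mul, Matrix.mul_one, smul_sub, smul_smul]
    rw [hconj, hconj2]
    push_cast
    module
  refine ⟨hunit, hid, ?_⟩
  -- part 3 : each factor is a contraction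
  have hfac : ∀ k : Fin d,
      (1 - ((A - α k • 1) * (1 - (starRingEnd ℂ) (α k) • A)⁻¹)ᴴ *
        ((A - α k • 1) * (1 - (starRingEnd ℂ) (α k) • A)⁻¹)).PosSemidef := by
    intro k
    set B := 1 - (starRingEnd ℂ) (α k) • A with hB
    set C := A - α k • 1 with hC
    have hBu : IsUnit B := hunit k
    have hinv : B * B⁻¹ = 1 :=
      mul_nonsing_inv B ((Matrix.isUnit_iff_isUnit_det B).mp hBu)
    rw [aux_key hinv, hid k]
    exact (aux_smul_psd hA_contr (by nlinarith [hα k, norm_nonneg (α k)])).conjTranspose_mul_mul_same _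
  refine ⟨hfac, ?_⟩
  -- part 4 : the product
  have hprod : ∀ (l : List (Matrix (Fin n) (Fin n) ℂ)),
      (∀ X ∈ l, (1 - Xᴴ * X).PosSemidef) → (1 - l.prodᴴ * l.prod).PosSemidef := by
    intro l
    induction l with
    | nil => intro _; simpa using Matrix.PosSemidef.zero
    | cons X t ih =>
      intro h
      rw [List.prod_cons]
      exact aux_contr_mul (h X List.mem_cons_self) (ih fun Y hY => h Y (List.mem_cons_of_mem X hY))
  have hP := hprod _ (by
    intro X hX
    rw [List.mem_ofFn] at hX
    obtain ⟨k, rfl⟩ := hX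
    exact hfac k)
  unfold blaschkeMatrix
  rw [conjTranspose_smul]
  rw [Matrix.smul_mul, Matrix.mul_smul, smul_smul]
  have hz1 : star ζ * ζ = 1 := by
    rw [Complex.star_def, mul_comm, Complex.mul_conj', hζ]
    norm_num
  rw [hz1, one_smul]
  exact hP
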